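/- For any positive integer δ and any string t of length n, the number of cubic runs of t whose minimal period p satisfies 2δ ≤ p ≤ 3δ is less than n/δ. -/

import Mathlib

/-- `p` is a period of the substring `t[i..j]` of the 1-indexed string `t`:
`1 ≤ p ≤ |t[i..j]| = j - i + 1`, and `t[k] = t[k + p]` whenever both positions
lie in `[i..j]` (vacuously, the length is always a period). -/
def IsPeriodOf {α : Type*} (t : ℕ → α) (i j p : ℕ) : Prop :=
  1 ≤ p ∧ p ≤ j + 1 - i ∧ ∀ k, i ≤ k → k + p ≤ j → t (k + p) = t k

/-- The minimal period of the substring `t[i..j]`. -/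
noncomputable def minPeriod {α : Type*} (t : ℕ → α) (i j : ℕ) : ℕ :=
  sInf {p | IsPeriodOf t i j p}

/-- `t[i..j]` is a run of the string `t[1..n]`: its exponent is at least `2`
(i.e. `j - i + 1 ≥ 2 · minPeriod`), and the extensions `t[i-1..j]` (if `i > 1`)
and `t[i..j+1]` (if `j < n`) have strictly larger minimal periods. -/
def IsRun {α : Type*} (t : ℕ → α) (n i j : ℕ) : Prop :=
  1 ≤ i ∧ i ≤ j ∧ j ≤ n ∧
  2 * minPeriod t i j ≤ j + 1 - i ∧
  (1 < i → minPeriod t i j < minPeriod t (i - 1) j) ∧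
  (j < n → minPeriod t i j < minPeriod t i (j + 1))

/-- A cubic run is a run of exponent at least `3`. -/
def IsCubicRun {α : Type*} (t : ℕ → α) (n i j : ℕ) : Prop :=
  IsRun t n i j ∧ 3 * minPeriod t i j ≤ j + 1 - i

section AuxPeriod

/-- The core (unbounded) period condition. -/
def Per {α : Type*} (t : ℕ → α) (i j p : ℕ) : Prop :=
  ∀ k, i ≤ k → k + p ≤ j → t (k + p) = t k

variable {α : Type*} {t : ℕ → α} {i j p q i' j' a b g : ℕ}

lemma per_len (h : i ≤ j) : IsPeriodOf t i j (j + 1 - i) := by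
  refine ⟨by omega, le_rfl, fun k hk hk' => ?_⟩
  omega

lemma minPeriod_le (h : IsPeriodOf t i j p) : minPeriod t i j ≤ p :=
  Nat.sInf_le h

lemma minPeriod_mem (h : i ≤ j) : IsPeriodOf t i j (minPeriod t i j) :=
  Nat.sInf_mem (s := {p | IsPeriodOf t i j p}) ⟨_, per_len h⟩

lemma minPeriod_pos (h : i ≤ j) : 1 ≤ minPeriod t i j := (minPeriod_mem h).1

lemma minPeriod_le_len (h : i ≤ j) : minPeriod t i j ≤ j + 1 - i := (minPeriod_mem h).2.1

lemma Per.mono (h : Per t i j p) (h1 : i ≤ i') (h2 : j' ≤ j) : Per t i' j' p :=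
  fun k hk hk' => h k (h1.trans hk) (hk'.trans h2)

lemma IsPeriodOf.per (h : IsPeriodOf t i j p) : Per t i j p := h.2.2

lemma isPeriodOf_of_per (h : Per t i j p) (h1 : 1 ≤ p) (h2 : p ≤ j + 1 - i) :
    IsPeriodOf t i j p := ⟨h1, h2, h⟩

/-- restriction on the right preserves min-period upper bound -/
lemma minPeriod_mono_right (hij : i ≤ j) (hjj : j ≤ j') :
    minPeriod t i j ≤ minPeriod t i j' := by
  rcases le_or_gt (minPeriod t i j') (j + 1 - i) with h | h
  · exact minPeriod_le (isPeriodOf_of_per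
      ((minPeriod_mem (hij.trans hjj)).per.mono le_rfl hjj)
      (minPeriod_pos (hij.trans hjj)) h)
  · exact (minPeriod_le_len hij).trans h.le

lemma minPeriod_mono_left (hij : i ≤ j) (hii : i' ≤ i) :
    minPeriod t i j ≤ minPeriod t i' j := by
  rcases le_or_gt (minPeriod t i' j) (j + 1 - i) with h | h
  · exact minPeriod_le (isPeriodOf_of_per
      ((minPeriod_mem (hii.trans hij)).per.mono hii le_rfl)
      (minPeriod_pos (hii.trans hij)) h)
  · exact (minPeriod_le_len hij).trans h.le

/-- chaining the period `m` times -/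
lemma Per.chain (h : Per t i j p) (m k : ℕ) (hk : i ≤ k) (hk' : k + m * p ≤ j) :
    t (k + m * p) = t k := by
  induction m with
  | zero => simp
  | succ m ih =>
    have h1 : k + m * p + p ≤ j := by ring_nf; ring_nf at hk'; omega
    have := h (k + m * p) (by omega) h1
    rw [show k + (m+1) * p = k + m * p + p by ring, this, ih (by omega)]

/-- Extend a period `g` of a subwindow of length ≥ p + g to the whole
`p`-periodic window. -/
lemma per_extend (hp : Per t i j p) (hg : Per t a b g) (ha : i ≤ a) (hb : b ≤ j)
    (hlen : a + p + g ≤ b + 1) (hp1 : 1 ≤ p) : Per t i j g := by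
  intro k hk hk'
  rcases le_or_gt a k with hak | hak
  · -- shift k down into the window [a, a+p-1]
    obtain ⟨m, r, hr, hmr⟩ : ∃ m r, r < p ∧ m * p + r = k - a :=
      ⟨(k - a) / p, (k - a) % p, Nat.mod_lt _ hp1, by
        rw [Nat.mul_comm]; exact Nat.div_add_mod _ _⟩
    have h1 : t k = t (a + r) := by
      rw [show k = a + r + m * p by omega]
      exact hp.chain m (a + r) (by omega) (by omega)
    have h2 : t (k + g) = t (a + r + g) := by
      rw [show k + g = a + r + g + m * p by omega]
      exact hp.chain m (a + r + g) (by omega) (by omega)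
    have h3 : t (a + r + g) = t (a + r) := hg (a + r) (by omega) (by omega)
    rw [h2, h3, h1]
  · -- shift k up into the window [a, a+p-1]
    obtain ⟨m, s, hs, hms⟩ : ∃ m s, s < p ∧ m * p + s = a - k + p - 1 :=
      ⟨(a - k + p - 1) / p, (a - k + p - 1) % p, Nat.mod_lt _ hp1, by
        rw [Nat.mul_comm]; exact Nat.div_add_mod _ _⟩
    have h1 : t (k + m * p) = t k := hp.chain m k (by omega) (by omega)
    have h2 : t (k + m * p + g) = t (k + g) := by
      rw [show k + m * p + g = k + g + m * p by omega]
      exact hp.chain m (k + g) (by omega) (by omega)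
    have h3 : t (k + m * p + g) = t (k + m * p) := hg (k + m * p) (by omega) (by omega)
    rw [← h1, ← h2, h3]

/-- Glue two overlapping `p`-periodic windows. -/
lemma per_glue {i2 j2 : ℕ} (h1 : Per t i j p) (h2 : Per t i2 j2 p)
    (_hi : i ≤ i2) (hov : i2 + p ≤ j + 1) (_hj : j ≤ j2) : Per t i j2 p := by
  intro k hk hk'
  rcases le_or_gt (k + p) j with h | h
  · exact h1 k hk h
  · exact h2 k (by omega) hk'

/-- Fine and Wilf periodicity lemma. -/
lemma fine_wilf : ∀ q p i j, 1 ≤ p → p ≤ q → Per t i j p → Per t i j q →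
    i + (p + q) ≤ j + 1 → Per t i j (Nat.gcd p q) := by
  intro q
  induction q using Nat.strong_induction_on with
  | _ q IH =>
    intro p i j hp1 hpq hP hQ hlen
    rcases eq_or_lt_of_le hpq with rfl | hlt
    · rwa [Nat.gcd_self]
    · have hjp : p ≤ j := by omega
      have hP' : Per t i (j - p) p := hP.mono le_rfl (by omega)
      have hQ' : Per t i (j - p) (q - p) := by
        intro k hk hkq
        have e1 : t (k + (q - p) + p) = t (k + (q - p)) := hP _ (by omega) (by omega)
        have e2 : t (k + q) = t k := hQ k hk (by omega)
        rw [show k + (q - p) + p = k + q by omega] at e1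
        rw [← e1, e2]
      have hgcd : Nat.gcd p (q - p) = Nat.gcd p q := by
        conv_rhs => rw [show q = q - p + p by omega]
        rw [Nat.gcd_add_self_right]
      have hg : Per t i (j - p) (Nat.gcd p q) := by
        rcases le_total p (q - p) with hc | hc
        · rw [← hgcd]
          exact IH (q - p) (by omega) p i (j - p) hp1 hc hP' hQ' (by omega)
        · rw [← hgcd, Nat.gcd_comm]
          exact IH p (by omega) (q - p) i (j - p) (by omega) hc hQ' hP' (by omega)
      have hgle : Nat.gcd p q ≤ q - p := by
        refine Nat.le_of_dvd (by omega) ?_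
        exact Nat.dvd_sub (Nat.gcd_dvd_right p q) (Nat.gcd_dvd_left p q)
      exact per_extend hP hg le_rfl (by omega) (by omega) hp1


lemma key {δ n i1 j1 i2 j2 : ℕ} (hδ : 0 < δ)
    (h1 : IsCubicRun t n i1 j1)
    (hp1a : 2 * δ ≤ minPeriod t i1 j1) (hp1b : minPeriod t i1 j1 ≤ 3 * δ)
    (h2 : IsCubicRun t n i2 j2)
    (hp2a : 2 * δ ≤ minPeriod t i2 j2) (hp2b : minPeriod t i2 j2 ≤ 3 * δ)
    (hle : i1 ≤ i2) (hclose : i2 < i1 + δ) : i1 = i2 ∧ j1 = j2 := by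
  obtain ⟨⟨hi1, hij1, hjn1, -, hleft1, hright1⟩, hcub1⟩ := h1
  obtain ⟨⟨hi2, hij2, hjn2, -, hleft2, hright2⟩, hcub2⟩ := h2
  set p1 := minPeriod t i1 j1 with hp1def
  set p2 := minPeriod t i2 j2 with hp2def
  have hP1 : Per t i1 j1 p1 := (minPeriod_mem hij1).per
  have hP2 : Per t i2 j2 p2 := (minPeriod_mem hij2).per
  have hl1 : p1 ≤ j1 + 1 - i1 := minPeriod_le_len hij1
  have hl2 : p2 ≤ j2 + 1 - i2 := minPeriod_le_len hij2
  have hcub1' : i1 + 3 * p1 ≤ j1 + 1 := by omega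
  have hcub2' : i2 + 3 * p2 ≤ j2 + 1 := by omega
  rcases eq_or_ne p1 p2 with hpp | hpp
  · -- same period: runs must coincide
    have hov : i2 + p1 ≤ j1 + 1 := by omega
    have hglue : ∀ J, j1 ≤ J → Per t i2 j2 p2 → j2 = J ∨ True := fun _ _ _ => Or.inr trivial
    have hii : i1 = i2 := by
      by_contra hne
      have hi2' : 1 < i2 := by omega
      have hPg : Per t (i2 - 1) j2 p1 := by
        rcases le_total j1 j2 with hj | hj
        · exact (per_glue hP1 (hpp ▸ hP2) hle (by omega) hj).mono (by omega) le_rfl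
        · exact hP1.mono (by omega) hj
      have : minPeriod t (i2 - 1) j2 ≤ p2 :=
        minPeriod_le (isPeriodOf_of_per (hpp ▸ hPg) (by omega) (by omega))
      exact absurd (hleft2 hi2') (by omega)
    have hjj : j1 = j2 := by
      rcases lt_trichotomy j1 j2 with hj | hj | hj
      · exfalso
        have hPg : Per t i1 j2 p1 := per_glue hP1 (hpp ▸ hP2) hle (by omega) hj.le
        have hm : minPeriod t i1 (j1 + 1) ≤ p1 := by
          calc minPeriod t i1 (j1 + 1) ≤ minPeriod t i1 j2 :=
                minPeriod_mono_right (by omega) (by omega)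
            _ ≤ p1 := minPeriod_le (isPeriodOf_of_per hPg (by omega) (by omega))
        exact absurd (hright1 (by omega)) (by omega)
      · exact hj
      · exfalso
        have hPg : Per t i2 j1 p2 := (hpp ▸ hP1).mono (by omega) le_rfl
        have hm : minPeriod t i2 (j2 + 1) ≤ p2 := by
          calc minPeriod t i2 (j2 + 1) ≤ minPeriod t i2 j1 :=
                minPeriod_mono_right (by omega) (by omega)
            _ ≤ p2 := minPeriod_le (isPeriodOf_of_per hPg (by omega) (by omega))
        exact absurd (hright2 (by omega)) (by omega)
    exact ⟨hii, hjj⟩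
  · -- distinct periods: impossible
    exfalso
    have hp1pos : 1 ≤ p1 := minPeriod_pos hij1
    have hp2pos : 1 ≤ p2 := minPeriod_pos hij2
    set m := min j1 j2 with hm
    have hov1 : Per t i2 m p1 := hP1.mono hle (by omega)
    have hov2 : Per t i2 m p2 := hP2.mono le_rfl (by omega)
    have hlen : i2 + (p1 + p2) ≤ m + 1 := by omega
    set g := Nat.gcd p1 p2 with hg
    have hgP : Per t i2 m g := by
      rcases le_total p1 p2 with hc | hc
      · exact fine_wilf p2 p1 i2 m hp1pos hc hov1 hov2 hlen
      · rw [hg, Nat.gcd_comm]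
        exact fine_wilf p1 p2 i2 m hp2pos hc hov2 hov1 (by omega)
    have hg1 : g ∣ p1 := Nat.gcd_dvd_left _ _
    have hg2 : g ∣ p2 := Nat.gcd_dvd_right _ _
    have hgle1 : g ≤ p1 := Nat.le_of_dvd (by omega) hg1
    have hgle2 : g ≤ p2 := Nat.le_of_dvd (by omega) hg2
    have hgpos : 1 ≤ g := Nat.pos_of_ne_zero fun h => by
      rw [hg, Nat.gcd_eq_zero_iff] at h; omega
    rcases hpp.lt_or_gt with hlt | hlt
    · -- p1 < p2 : extend g into run 2
      have : Per t i2 j2 g := per_extend hP2 hgP le_rfl (by omega) (by omega) hp2pos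
      have : p2 ≤ g := minPeriod_le (isPeriodOf_of_per this hgpos (by omega))
      omega
    · -- p2 < p1 : extend g into run 1
      have : Per t i1 j1 g := per_extend hP1 hgP hle (by omega) (by omega) hp1pos
      have : p1 ≤ g := minPeriod_le (isPeriodOf_of_per this hgpos (by omega))
      omega

end AuxPeriod

/-- For any positive `δ` and any string of length `n ≥ 1`, the number of cubic
runs with minimal period in `[2δ, 3δ]` is less than `n/δ`. -/
theorem number_of_cubic_runs_with_period_between {α : Type*} [LinearOrder α]
    (δ n : ℕ) (hδ : 0 < δ) (hn : 0 < n) (t : ℕ → α) :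
    (({ij : ℕ × ℕ | IsCubicRun t n ij.1 ij.2 ∧
        2 * δ ≤ minPeriod t ij.1 ij.2 ∧ minPeriod t ij.1 ij.2 ≤ 3 * δ}.ncard : ℝ))
      < n / δ := by
  set S : Set (ℕ × ℕ) := {ij : ℕ × ℕ | IsCubicRun t n ij.1 ij.2 ∧
        2 * δ ≤ minPeriod t ij.1 ij.2 ∧ minPeriod t ij.1 ij.2 ≤ 3 * δ} with hS
  have hpos : (0 : ℝ) < (n : ℝ) / (δ : ℝ) :=
    div_pos (by exact_mod_cast hn) (by exact_mod_cast hδ)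
  -- membership bounds
  have hbound : ∀ ij ∈ S, 1 ≤ ij.1 ∧ ij.1 + 6 * δ ≤ n + 1 := by
    rintro ⟨i, j⟩ ⟨⟨⟨hi, hij, hjn, -, -, -⟩, hcub⟩, hpa, hpb⟩
    exact ⟨hi, by omega⟩
  rcases lt_or_ge n (6 * δ) with hsmall | hbig
  · have : S = ∅ := by
      ext ij
      simp only [Set.mem_empty_iff_false, iff_false]
      intro h
      have := hbound ij h
      omega
    rw [this]
    simpa using hpos
  · -- injectivity of the start-block map
    have hinj : Set.InjOn (fun ij : ℕ × ℕ => (ij.1 - 1) / δ) S := by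
      rintro ⟨i1, j1⟩ hm1 ⟨i2, j2⟩ hm2 hf
      simp only at hf
      have hb1 := hbound _ hm1
      have hb2 := hbound _ hm2
      obtain ⟨h1, hp1a, hp1b⟩ := hm1
      obtain ⟨h2, hp2a, hp2b⟩ := hm2
      simp only at hb1 hb2 h1 h2 hp1a hp1b hp2a hp2b
      have hd1 := Nat.div_add_mod (i1 - 1) δ
      have hd2 := Nat.div_add_mod (i2 - 1) δ
      have hm1' : (i1 - 1) % δ < δ := Nat.mod_lt _ hδ
      have hm2' : (i2 - 1) % δ < δ := Nat.mod_lt _ hδ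
      rcases le_total i1 i2 with hc | hc
      · have hclose : i2 < i1 + δ := by
          rw [hf] at hd1; omega
        obtain ⟨e1, e2⟩ := key hδ h1 hp1a hp1b h2 hp2a hp2b hc hclose
        simp [e1, e2]
      · have hclose : i1 < i2 + δ := by
          rw [hf] at hd1; omega
        obtain ⟨e1, e2⟩ := key hδ h2 hp2a hp2b h1 hp1a hp1b hc hclose
        simp [e1, e2]
    -- the image lies in Iic ((n - 6δ)/δ)
    set K := (n - 6 * δ) / δ with hK
    have hsub : (fun ij : ℕ × ℕ => (ij.1 - 1) / δ) '' S ⊆ ↑(Finset.Iic K) := by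
      rintro x ⟨ij, hij, rfl⟩
      have := hbound ij hij
      simp only [Finset.coe_Iic, Set.mem_Iic]
      exact Nat.div_le_div_right (by omega)
    have hcard : S.ncard ≤ K + 1 := by
      calc S.ncard = ((fun ij : ℕ × ℕ => (ij.1 - 1) / δ) '' S).ncard :=
            (Set.ncard_image_of_injOn hinj).symm
        _ ≤ (↑(Finset.Iic K) : Set ℕ).ncard :=
            Set.ncard_le_ncard hsub (Finset.Iic K).finite_toSet
        _ = K + 1 := by rw [Set.ncard_coe_finset]; simp
    -- K + 1 = n/δ - 5 < n/δ
    have hKval : n / δ = K + 6 := by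
      rw [hK]
      conv_lhs => rw [show n = (n - 6 * δ) + 6 * δ by omega]
      rw [Nat.add_mul_div_right _ _ hδ]
    have hlt : S.ncard < n / δ := by omega
    have hcast : ((n / δ : ℕ) : ℝ) ≤ (n : ℝ) / (δ : ℝ) := Nat.cast_div_le
    calc (S.ncard : ℝ) < ((n / δ : ℕ) : ℝ) := by exact_mod_cast hlt
      _ ≤ (n : ℝ) / (δ : ℝ) := hcast
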